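/- If A is a topological abelian group in the class ℰ, then the natural map A → A_∧ := lim_{n≥1} A/nA is injective; equivalently, the intersection ⋂_{n≥1} nA is trivial. (Claim 'If A is in the class ℰ, then A ↪ A_∧' of Section 3.) -/

import Mathlib

/-- The subgroup `nA = {n·a : a ∈ A}` of an abelian group `A`. -/
def nSub (A : Type*) [AddCommGroup A] (n : ℕ) : AddSubgroup A where
  carrier := Set.range fun a : A => n • a
  zero_mem' := ⟨0, smul_zero n⟩
  add_mem' := by rintro x y ⟨a, rfl⟩ ⟨b, rfl⟩; exact ⟨a + b, smul_add n a b⟩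
  neg_mem' := by rintro x ⟨a, rfl⟩; exact ⟨-a, smul_neg n a⟩

theorem nSub_le {A : Type*} [AddCommGroup A] {n m : ℕ} (h : n ∣ m) :
    nSub A m ≤ nSub A n := by
  rintro x ⟨a, rfl⟩
  obtain ⟨c, rfl⟩ := h
  exact ⟨c • a, (mul_smul n c a).symm⟩

/-- The natural projection `A/mA → A/nA` when `n ∣ m`. -/
def projMap {A : Type*} [AddCommGroup A] {n m : ℕ} (h : n ∣ m) :
    A ⧸ nSub A m →+ A ⧸ nSub A n :=
  QuotientAddGroup.map _ _ (AddMonoidHom.id A) fun _x hx => nSub_le h hx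

/-- The completion `A_∧ = lim_{n ≥ 1} A/nA`, the inverse limit over positive integers
ordered by divisibility, as the subgroup of compatible families. -/
def ComplA (A : Type*) [AddCommGroup A] :
    AddSubgroup (∀ n : ℕ+, A ⧸ nSub A (n : ℕ)) where
  carrier := {f | ∀ (n m : ℕ+) (h : (n : ℕ) ∣ (m : ℕ)), projMap h (f m) = f n}
  zero_mem' := fun _n _m _h => map_zero _
  add_mem' := by
    intro f g hf hg n m h
    simp only [Pi.add_apply, map_add, hf n m h, hg n m h]
  neg_mem' := by
    intro f hf n m h
    simp only [Pi.neg_apply, map_neg, hf n m h]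

/-- The natural map `A → A_∧` sending `a` to its family of residues. -/
def toCompl (A : Type*) [AddCommGroup A] : A →+ ↥(ComplA A) where
  toFun a := ⟨fun _n => QuotientAddGroup.mk a, fun _n _m _h => rfl⟩
  map_zero' := rfl
  map_add' _a _b := rfl

/-- A topological abelian group `A` belongs to the class ℰ if it admits a closed
subgroup `P` which is profinite (compact, Hausdorff and totally disconnected) such
that the quotient `A ⧸ P`, with the quotient topology, is discrete and finitely
generated. -/
def IsClassE (A : Type*) [AddCommGroup A] [TopologicalSpace A] : Prop :=
  ∃ P : AddSubgroup A, IsClosed (P : Set A) ∧ CompactSpace P ∧ T2Space P ∧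
    TotallyDisconnectedSpace P ∧ DiscreteTopology (A ⧸ P) ∧ AddGroup.FG (A ⧸ P)

/-- In a finitely generated abelian group, there is `N > 0` killing all torsion,
and the intersection of all `mG` is trivial. -/
theorem fg_key (G : Type*) [AddCommGroup G] [AddGroup.FG G] :
    ∃ N : ℕ, 0 < N ∧ (∀ q : G, (∃ k : ℕ, 0 < k ∧ k • q = 0) → N • q = 0) ∧
      (∀ g : G, (∀ m : ℕ, 0 < m → ∃ x : G, m • x = g) → g = 0) := by
  obtain ⟨n, ι, fι, p, hp, e, ⟨f⟩⟩ := AddCommGroup.equiv_free_prod_directSum_zmod G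
  set N : ℕ := ∏ i, p i ^ e i with hNdef
  have hNpos : 0 < N := Finset.prod_pos fun i _ => pow_pos (hp i).pos _
  -- the finite part is killed by N
  have hkill : ∀ v : DirectSum ι fun i => ZMod (p i ^ e i), N • v = 0 := by
    intro v
    refine DFinsupp.ext fun i => ?_
    haveI : NeZero (p i ^ e i) := ⟨pow_ne_zero _ (hp i).pos.ne'⟩
    have hdvd : p i ^ e i ∣ N := Finset.dvd_prod_of_mem _ (Finset.mem_univ i)
    have h1 : (N • v) i = N • (v i) := map_nsmul (DFinsupp.evalAddMonoidHom i) N v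
    have h2 : ((N : ℕ) : ZMod (p i ^ e i)) = 0 :=
      (ZMod.natCast_eq_zero_iff _ _).mpr hdvd
    rw [DFinsupp.zero_apply, h1, nsmul_eq_mul, h2, zero_mul]
  -- the free part is torsion-free
  have hfree : ∀ (k : ℕ), 0 < k → ∀ u : Fin n →₀ ℤ, k • u = 0 → u = 0 := by
    intro k hk u hu
    ext i
    have : (k • u) i = 0 := by rw [hu]; rfl
    have h2 : (k : ℤ) * u i = 0 := by
      simpa [nsmul_eq_mul] using this
    rcases mul_eq_zero.mp h2 with h | h
    · exact absurd (by exact_mod_cast h) hk.ne'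
    · simpa using h
  refine ⟨N, hNpos, ?_, ?_⟩
  · intro q ⟨k, hk, hkq⟩
    have h1 : k • (f q).1 = 0 := by
      have : f (k • q) = 0 := by rw [hkq, map_zero]
      have := congrArg Prod.fst this
      simpa using this
    have hu : (f q).1 = 0 := hfree k hk _ h1
    have : f (N • q) = 0 := by
      rw [map_nsmul]
      have : N • f q = (N • (f q).1, N • (f q).2) := rfl
      rw [this, hu, smul_zero, hkill]
      rfl
    exact f.injective (by rw [this, map_zero])
  · intro g hg
    -- second component vanishes
    have hv : (f g).2 = 0 := by
      obtain ⟨x, hx⟩ := hg N hNpos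
      have : N • f x = f g := by rw [← map_nsmul, hx]
      have := congrArg Prod.snd this
      simp only [Prod.smul_snd] at this
      rw [← this, hkill]
    -- first component vanishes
    have hu : (f g).1 = 0 := by
      ext i
      set c : ℤ := (f g).1 i with hc
      have hdvd : ∀ m : ℕ, 0 < m → (m : ℤ) ∣ c := by
        intro m hm
        obtain ⟨x, hx⟩ := hg m hm
        have : m • f x = f g := by rw [← map_nsmul, hx]
        have := congrArg Prod.fst this
        simp only [Prod.smul_fst] at this
        refine ⟨(f x).1 i, ?_⟩
        rw [hc, ← this]
        simp [mul_comm]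
      by_contra hcne
      have h1 : ((c.natAbs + 1 : ℕ) : ℤ) ∣ |c| := (dvd_abs _ _).mpr (hdvd _ (Nat.succ_pos _))
      have h2 : ((c.natAbs + 1 : ℕ) : ℤ) ≤ |c| :=
        Int.le_of_dvd (abs_pos.mpr hcne) h1
      have : |c| = (c.natAbs : ℤ) := Int.abs_eq_natAbs c
      omega
    have : f g = 0 := Prod.ext hu hv
    exact f.injective (by rw [this, map_zero])

/-- In a profinite abelian group, an element divisible by every positive integer is zero. -/
theorem profinite_key {B : Type*} [AddCommGroup B] [TopologicalSpace B]
    [IsTopologicalAddGroup B] [CompactSpace B] [T2Space B] [TotallyDisconnectedSpace B]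
    (b : B) (h : ∀ m : ℕ, 0 < m → ∃ x : B, m • x = b) : b = 0 := by
  by_contra hb
  haveI : TotallySeparatedSpace B := loc_compact_t2_tot_disc_iff_tot_sep.mp ‹_›
  obtain ⟨W, hW, h0, hbW⟩ := exists_isClopen_of_totally_separated (Ne.symm hb)
  obtain ⟨H, hH⟩ :=
    IsTopologicalAddGroup.exist_openAddSubgroup_sub_clopen_nhds_of_zero hW h0
  haveI : Finite (B ⧸ H.toAddSubgroup) :=
    AddSubgroup.quotient_finite_of_isOpen _ H.isOpen
  haveI : H.toAddSubgroup.FiniteIndex :=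
    AddSubgroup.finiteIndex_of_finite_quotient (H := H.toAddSubgroup)
  have hidx : 0 < H.toAddSubgroup.index :=
    Nat.pos_of_ne_zero AddSubgroup.FiniteIndex.index_ne_zero
  obtain ⟨x, hx⟩ := h _ hidx
  have : b ∈ H.toAddSubgroup := hx ▸ AddSubgroup.nsmul_index_mem H.toAddSubgroup x
  exact hbW (hH this)

/-- If `A` is a topological abelian group in the class ℰ, then the natural map
`A → A_∧ = lim_{n ≥ 1} A/nA` is injective. -/
theorem statement_7 (A : Type*) [AddCommGroup A] [TopologicalSpace A]
    [IsTopologicalAddGroup A] (hA : IsClassE A) :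
    Function.Injective ⇑(toCompl A) := by
  obtain ⟨P, hPc, hcpt, ht2, htd, hdisc, hfg⟩ := hA
  haveI := hfg
  obtain ⟨N, hN, hNtor, hNint⟩ := fg_key (A ⧸ P)
  rw [injective_iff_map_eq_zero]
  intro a ha
  -- `a` is divisible by every positive integer
  have hmem : ∀ m : ℕ, 0 < m → ∃ x : A, m • x = a := by
    intro m hm
    have h1 := congrFun (congrArg Subtype.val ha) ⟨m, hm⟩
    exact (QuotientAddGroup.eq_zero_iff a).mp h1
  set π : A →+ A ⧸ P := QuotientAddGroup.mk' P with hπ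
  -- the image of `a` in `A ⧸ P` is zero
  have haP : a ∈ P := by
    have : π a = 0 := by
      apply hNint
      intro m hm
      obtain ⟨x, hx⟩ := hmem m hm
      exact ⟨π x, by rw [← map_nsmul, hx]⟩
    exact (QuotientAddGroup.eq_zero_iff a).mp this
  -- `a` is divisible by every positive integer inside `P`
  have hdivP : ∀ m : ℕ, 0 < m → ∃ q : P, m • q = (⟨a, haP⟩ : P) := by
    intro m hm
    obtain ⟨x, hx⟩ := hmem (m * N) (Nat.mul_pos hm hN)
    have hxtor : N • π x = 0 := by
      apply hNtor
      refine ⟨m * N, Nat.mul_pos hm hN, ?_⟩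
      rw [← map_nsmul, hx]
      exact (QuotientAddGroup.eq_zero_iff a).mpr haP
    have hNx : N • x ∈ P := by
      have : π (N • x) = 0 := by rw [map_nsmul]; exact hxtor
      exact (QuotientAddGroup.eq_zero_iff _).mp this
    refine ⟨⟨N • x, hNx⟩, ?_⟩
    apply Subtype.ext
    show m • (N • x) = a
    rw [← mul_nsmul', hx]
  have : (⟨a, haP⟩ : P) = 0 := profinite_key _ hdivP
  simpa using congrArg Subtype.val this
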